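/- Let (C, R, 𝓡) be a big-step semantics (satisfying the boundedness condition BP), 𝓡^tr its trace semantics, 𝓡^? its partial-evaluation semantics, and ⇝ the one-step reduction relation on finite proof trees in 𝓡^?. Then ⊢_{𝓡^tr} c ⇒ t holds for some infinite trace t ∈ C^ω if and only if there is an infinite ⇝-reduction sequence starting from the single-node tree with root c ⇒ ?. -/

import Mathlib

namespace BigStepMeta

universe u

/-- A judgment `c ⇒ r`: a configuration together with a result. -/
structure Judg (C : Type u) where
  conf : C
  res  : C

/-- A big-step rule: a conclusion configuration plus a nonempty finite list of premises.
The last premise is the continuation; the conclusion judgment is `concl ⇒ (last premise).res`. -/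
structure Rule (C : Type u) where
  concl : C
  premises : List (Judg C)
  ne : premises ≠ []

/-- The last premise (continuation) of a rule. -/
def Rule.lastJ {C : Type u} (ρ : Rule C) : Judg C := ρ.premises.getLast ρ.ne

/-- A big-step semantics `(C, R, 𝓡)`: configurations `C`, results `R ⊆ C`, rules `𝓡`. -/
structure BigStep (C : Type u) where
  R : Set C
  Rules : Set (Rule C)
  concl_not_res : ∀ ρ ∈ Rules, ρ.concl ∉ R
  prem_res : ∀ ρ ∈ Rules, ∀ j ∈ ρ.premises, j.res ∈ R

variable {C : Type u}

/-- Condition BP: the number of premises of rules is bounded. -/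
def BigStep.BP (S : BigStep C) : Prop :=
  ∃ b : ℕ, ∀ ρ ∈ S.Rules, ρ.premises.length ≤ b

/-- Inductive derivability `⊢_𝓡 c ⇒ r`: there is a finite proof tree.
For each result `r ∈ R` there is an implicit axiom `r ⇒ r`. -/
inductive Derives (S : BigStep C) : C → C → Prop
  | ax {r : C} : r ∈ S.R → Derives S r r
  | rule {ρ : Rule C} : ρ ∈ S.Rules →
      (∀ j ∈ ρ.premises, Derives S j.conf j.res) →
      Derives S ρ.concl ρ.lastJ.res

/-! ## Traces -/

/-- A finite or infinite trace of configurations. -/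
inductive Trace (C : Type u) where
  | fin : List C → Trace C
  | inf : (ℕ → C) → Trace C

/-- Concatenation of a finite list with an infinite sequence. -/
def appendInf (l : List C) (f : ℕ → C) : ℕ → C :=
  fun n => if h : n < l.length then l.get ⟨n, h⟩ else f (n - l.length)

/-- The finite trace `t_k · R(j_k)` associated to a premise and a chosen finite trace. -/
def finPart (p : Judg C × List C) : List C := p.2 ++ [p.1.res]

/-- The rule instances of the trace semantics `𝓡^tr`: a conclusion `c ⇒ t`
together with its list of premises. -/
inductive TrRule (S : BigStep C) : C → Trace C → List (C × Trace C) → Prop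
  | ax {r : C} : r ∈ S.R → TrRule S r (.fin [r]) []
  | intro {ρ : Rule C} {ts : List (List C)} :
      ρ ∈ S.Rules → ts.length = ρ.premises.length →
      TrRule S ρ.concl
        (.fin (ρ.concl :: ((ρ.premises.zip ts).map finPart).flatten))
        ((ρ.premises.zip ts).map (fun p => (p.1.conf, Trace.fin (finPart p))))
  | div {ρ : Rule C} {pre rest : List (Judg C)} {j : Judg C} {ts : List (List C)} {f : ℕ → C} :
      ρ ∈ S.Rules → ρ.premises = pre ++ j :: rest →
      ts.length = pre.length →
      TrRule S ρ.concl
        (.inf (appendInf (ρ.concl :: ((pre.zip ts).map finPart).flatten) f))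
        (((pre.zip ts).map (fun p => (p.1.conf, Trace.fin (finPart p)))) ++
          [(j.conf, Trace.inf f)])

/-- `⊢_{𝓡^tr} c ⇒ t` by a finite derivation (inductive interpretation of `𝓡^tr`). -/
inductive TrDerivesFin (S : BigStep C) : C → Trace C → Prop
  | step {c : C} {t : Trace C} {prems : List (C × Trace C)} :
      TrRule S c t prems →
      (∀ p ∈ prems, TrDerivesFin S p.1 p.2) →
      TrDerivesFin S c t

/-- `⊢_{𝓡^tr} c ⇒ t`: coinductive interpretation of `𝓡^tr`, i.e. existence of a possibly
infinite proof tree, expressed as membership in some backward-closed (consistent) relation. -/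
def TrDerives (S : BigStep C) (c : C) (t : Trace C) : Prop :=
  ∃ X : C → Trace C → Prop,
    (∀ c' t', X c' t' → ∃ prems, TrRule S c' t' prems ∧ ∀ p ∈ prems, X p.1 p.2) ∧
    X c t

/-! ## Wrong -/

/-- There is a rule with conclusion configuration `c`, first premises `pre`, whose next
premise has configuration `c'` and result `r` (i.e. a rule `ρ' ∼ᵢ ρ` with `R(ρ', i) = r`). -/
def HasContinuation (S : BigStep C) (c : C) (pre : List (Judg C)) (c' r : C) : Prop :=
  ∃ ρ' ∈ S.Rules, ∃ j' : Judg C, ∃ rest' : List (Judg C),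
    ρ'.premises = pre ++ j' :: rest' ∧ ρ'.concl = c ∧ j'.conf = c' ∧ j'.res = r

/-- Derivability in the wrong semantics `𝓡^wr`; `none` plays the role of `wrong`. -/
inductive DerivesW (S : BigStep C) : C → Option C → Prop
  | ax {r : C} : r ∈ S.R → DerivesW S r (some r)
  | rule {ρ : Rule C} : ρ ∈ S.Rules →
      (∀ j ∈ ρ.premises, DerivesW S j.conf (some j.res)) →
      DerivesW S ρ.concl (some ρ.lastJ.res)
  | wrong_intro {ρ : Rule C} {pre rest : List (Judg C)} {j : Judg C} {r : C} :
      ρ ∈ S.Rules → ρ.premises = pre ++ j :: rest → r ∈ S.R →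
      ¬ HasContinuation S ρ.concl pre j.conf r →
      (∀ j' ∈ pre, DerivesW S j'.conf (some j'.res)) →
      DerivesW S j.conf (some r) →
      DerivesW S ρ.concl none
  | wrong_ax {c : C} : c ∉ S.R → (¬ ∃ ρ ∈ S.Rules, ρ.concl = c) →
      DerivesW S c none
  | wrong_prop {ρ : Rule C} {pre rest : List (Judg C)} {j : Judg C} :
      ρ ∈ S.Rules → ρ.premises = pre ++ j :: rest →
      (∀ j' ∈ pre, DerivesW S j'.conf (some j'.res)) →
      DerivesW S j.conf none →
      DerivesW S ρ.concl none

/-! ## Indexed predicates and soundness conditions -/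

variable {I : Type u}

/-- `c ∈ Π`, i.e. `c ∈ Π_ι` for some index `ι`. -/
def InPred (P : I → Set C) (c : C) : Prop := ∃ i : I, c ∈ P i

/-- Condition S1 (local preservation). -/
def LocalPres (S : BigStep C) (P : I → Set C) : Prop :=
  ∀ ρ ∈ S.Rules, ∀ i : I, ρ.concl ∈ P i →
    ∃ f : ℕ → I, f (ρ.premises.length - 1) = i ∧
      ∀ (k : ℕ) (hk : k < ρ.premises.length),
        (∀ (h : ℕ) (hh : h < k), (ρ.premises.get ⟨h, hh.trans hk⟩).res ∈ P (f h)) →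
        (ρ.premises.get ⟨k, hk⟩).conf ∈ P (f k)

/-- Condition S2 (∃-progress). -/
def ExProgress (S : BigStep C) (P : I → Set C) : Prop :=
  ∀ c : C, InPred P c → c ∉ S.R → ∃ ρ ∈ S.Rules, ρ.concl = c

/-- Condition S3 (∀-progress). -/
def AllProgress (S : BigStep C) (P : I → Set C) : Prop :=
  ∀ ρ ∈ S.Rules, InPred P ρ.concl →
    ∀ (pre : List (Judg C)) (j : Judg C) (rest : List (Judg C)),
      ρ.premises = pre ++ j :: rest →
      (∀ j' ∈ pre, Derives S j'.conf j'.res) →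
      ∀ r ∈ S.R, Derives S j.conf r →
      HasContinuation S ρ.concl pre j.conf r

/-- Condition S4 (progress-may). -/
def ProgressMay (S : BigStep C) (P : I → Set C) : Prop :=
  ∀ c : C, InPred P c → c ∉ S.R →
    ∃ ρ ∈ S.Rules, ρ.concl = c ∧
      ∀ (pre : List (Judg C)) (j : Judg C) (rest : List (Judg C)),
        ρ.premises = pre ++ j :: rest →
        (∀ j' ∈ pre, Derives S j'.conf j'.res) →
        ¬ Derives S j.conf j.res →
        ¬ ∃ r : C, Derives S j.conf r

/-! ## Partial evaluation: the inference system `𝓡^?` -/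

/-- The rule instances of the partial-evaluation semantics `𝓡^?`; `none` plays the role
of the unknown result `?`. -/
inductive URule (S : BigStep C) : C → Option C → List (C × Option C) → Prop
  | ax {r : C} : r ∈ S.R → URule S r (some r) []
  | rule {ρ : Rule C} : ρ ∈ S.Rules →
      URule S ρ.concl (some ρ.lastJ.res) (ρ.premises.map (fun j => (j.conf, some j.res)))
  | unk_ax {c : C} : URule S c none []
  | unk {ρ : Rule C} {pre rest : List (Judg C)} {j : Judg C} {r : C} :
      ρ ∈ S.Rules → ρ.premises = pre ++ j :: rest → r ∈ S.R →
      URule S ρ.concl none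
        (pre.map (fun j' => (j'.conf, some j'.res)) ++ [(j.conf, some r)])
  | prop {ρ : Rule C} {pre rest : List (Judg C)} {j : Judg C} :
      ρ ∈ S.Rules → ρ.premises = pre ++ j :: rest →
      URule S ρ.concl none
        (pre.map (fun j' => (j'.conf, some j'.res)) ++ [(j.conf, none)])

/-! ## Possibly infinite trees as partial functions -/

/-- A (possibly infinite) tree labelled by judgments `c ⇒ u`, `u ∈ R ∪ {?}`, given as a
partial function on addresses (lists of positive naturals), with nonempty domain closed
under parents and left siblings. -/
structure PTree (C : Type u) where
  label : List ℕ+ → Option (C × Option C)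
  root_def : label [] ≠ none
  closed : ∀ (α : List ℕ+) (n : ℕ+), label (α ++ [n]) ≠ none → label α ≠ none
  siblings : ∀ (α : List ℕ+) (n k : ℕ+), k ≤ n →
    label (α ++ [n]) ≠ none → label (α ++ [k]) ≠ none

/-- `τ` is a proof tree in `𝓡^?`: at each node, the children are exactly the premises
of a rule of `𝓡^?` with the node's judgment as conclusion. -/
def PTree.IsProofTree (S : BigStep C) (τ : PTree C) : Prop :=
  ∀ (α : List ℕ+) (p : C × Option C), τ.label α = some p →
    ∃ prems : List (C × Option C), URule S p.1 p.2 prems ∧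
      ∀ n : ℕ+, τ.label (α ++ [n]) = prems[(n : ℕ) - 1]?

/-- The order `τ ⊑ τ'` on trees: larger domain, same configurations, and equal subtrees
at nodes whose result is already known (in `R`). -/
def PTree.LE (τ τ' : PTree C) : Prop :=
  ∀ (α : List ℕ+) (p : C × Option C), τ.label α = some p →
    ∃ p' : C × Option C, τ'.label α = some p' ∧ p.1 = p'.1 ∧
      (p.2 ≠ none → ∀ β : List ℕ+, τ.label (α ++ β) = τ'.label (α ++ β))

/-- A tree is finite if its domain is finite. -/
def PTree.Finite (τ : PTree C) : Prop := {α : List ℕ+ | τ.label α ≠ none}.Finite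

/-- A (typically infinite) proof tree is well-formed if at every level there is a node
labelled by an incomplete judgment, and subtrees rooted at complete judgments are finite. -/
def PTree.WellFormed (τ : PTree C) : Prop :=
  (∀ n : ℕ, ∃ (α : List ℕ+) (c : C), α.length = n ∧ τ.label α = some (c, none)) ∧
  (∀ (α : List ℕ+) (c r : C), τ.label α = some (c, some r) →
    {β : List ℕ+ | τ.label (α ++ β) ≠ none}.Finite)

/-! ## Finite proof trees and the reduction relation -/

/-- Finite trees labelled by judgments `c ⇒ u`, `u ∈ R ∪ {?}` (with `none` playing `?`). -/
inductive FTree (C : Type u) where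
  | node : C → Option C → List (FTree C) → FTree C

/-- The judgment at the root of a finite tree. -/
def FTree.judg : FTree C → C × Option C
  | .node c u _ => (c, u)

/-- `τ` is a finite proof tree in the partial-evaluation semantics `𝓡^?`. -/
inductive IsFPT (S : BigStep C) : FTree C → Prop
  | mk {c : C} {u : Option C} {l : List (FTree C)} :
      URule S c u (l.map FTree.judg) →
      (∀ τ ∈ l, IsFPT S τ) →
      IsFPT S (.node c u l)

/-- A finite proof tree is complete if all its judgments have results in `R`. -/
inductive FTree.Complete (S : BigStep C) : FTree C → Prop
  | mk {c : C} {r : C} {l : List (FTree C)} :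
      r ∈ S.R →
      (∀ τ ∈ l, FTree.Complete S τ) →
      FTree.Complete S (.node c (some r) l)

/-- The order `τ ⊑ τ'` on finite trees. -/
inductive FTreeLE : FTree C → FTree C → Prop
  | done {c r : C} {l : List (FTree C)} :
      FTreeLE (.node c (some r) l) (.node c (some r) l)
  | step {c : C} {u' : Option C} {l l₁ l₂ : List (FTree C)} :
      l.length = l₁.length →
      (∀ p ∈ l.zip l₁, FTreeLE p.1 p.2) →
      FTreeLE (.node c none l) (.node c u' (l₁ ++ l₂))

/-- The one-step reduction relation `⇝` on finite proof trees in `𝓡^?`. -/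
inductive Red (S : BigStep C) : FTree C → FTree C → Prop
  /-- The axiom `r ⇒ ?` (with `r ∈ R`) steps to the axiom `r ⇒ r`. -/
  | res {r : C} : r ∈ S.R → Red S (.node r none []) (.node r (some r) [])
  /-- The axiom `c ⇒ ?` steps, for a rule `ρ` with conclusion configuration `c`,
  to the tree applying `prop(ρ,1,?)` to the leaf `c' ⇒ ?`, `c'` the first premise
  configuration of `ρ`. -/
  | start {ρ : Rule C} {j : Judg C} {rest : List (Judg C)} :
      ρ ∈ S.Rules → ρ.premises = j :: rest →
      Red S (.node ρ.concl none []) (.node ρ.concl none [.node j.conf none []])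
  /-- A tree with root `c ⇒ ?` whose children are the first `i` premises of some
  `ρ' ∈ 𝓡` (with `#ρ' = i`, last premise result `r`) steps to the same tree with
  root `c ⇒ r`. -/
  | complete {ρ' : Rule C} {pre : List (Judg C)} {j' : Judg C} {l : List (FTree C)} :
      ρ' ∈ S.Rules → ρ'.premises = pre ++ [j'] →
      l.map FTree.judg = pre.map (fun j => (j.conf, some j.res)) ++ [(j'.conf, some j'.res)] →
      Red S (.node ρ'.concl none l) (.node ρ'.concl (some j'.res) l)
  /-- A tree with root `c ⇒ ?` whose children are the first `i` premises of some
  `ρ' ∈ 𝓡` having an `(i+1)`-th premise steps by adding the leaf for that premise's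
  configuration. -/
  | next {ρ' : Rule C} {pre rest : List (Judg C)} {j' j'' : Judg C} {l : List (FTree C)} :
      ρ' ∈ S.Rules → ρ'.premises = pre ++ j' :: j'' :: rest →
      l.map FTree.judg = pre.map (fun j => (j.conf, some j.res)) ++ [(j'.conf, some j'.res)] →
      Red S (.node ρ'.concl none l) (.node ρ'.concl none (l ++ [.node j''.conf none []]))
  /-- Propagation: a step of the last child is propagated. -/
  | inner {c : C} {l : List (FTree C)} {τ τ' : FTree C} :
      Red S τ τ' →
      Red S (.node c none (l ++ [τ])) (.node c none (l ++ [τ']))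


/-! ### Generic helpers -/

theorem seq_of_step {α : Type u} {P : α → Prop} {Q : α → α → Prop}
    (h : ∀ a, P a → ∃ b, P b ∧ Q a b) {a0 : α} (h0 : P a0) :
    ∃ f : ℕ → α, f 0 = a0 ∧ (∀ n, P (f n)) ∧ ∀ n, Q (f n) (f (n + 1)) := by
  classical
  let st : {a // P a} → {a // P a} := fun s => ⟨(h s.1 s.2).choose, (h s.1 s.2).choose_spec.1⟩
  let g : ℕ → {a // P a} := fun n => st^[n] ⟨a0, h0⟩
  refine ⟨fun n => (g n).1, rfl, fun n => (g n).2, fun n => ?_⟩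
  have hg : g (n+1) = st (g n) := Function.iterate_succ_apply' st n _
  show Q (g n).1 (g (n+1)).1
  rw [hg]
  exact (h (g n).1 (g n).2).choose_spec.2

theorem inf_of_plus {α : Type u} {R : α → α → Prop} {P : α → Prop}
    (h : ∀ a, P a → ∃ b, Relation.TransGen R a b ∧ P b) {a0 : α} (h0 : P a0) :
    ∃ f : ℕ → α, f 0 = a0 ∧ ∀ n, R (f n) (f (n + 1)) := by
  have hstep : ∀ a, (∃ b, Relation.ReflTransGen R a b ∧ P b) →
      ∃ c, (∃ b, Relation.ReflTransGen R c b ∧ P b) ∧ R a c := by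
    rintro a ⟨b, hab, hb⟩
    rcases hab.cases_head with rfl | ⟨c, hac, hcb⟩
    · obtain ⟨b', htg, hb'⟩ := h a hb
      obtain ⟨c, hac, hcb'⟩ := Relation.TransGen.head'_iff.1 htg
      exact ⟨c, ⟨b', hcb', hb'⟩, hac⟩
    · exact ⟨c, ⟨b, hcb, hb⟩, hac⟩
  obtain ⟨f, hf0, _, hQ⟩ := seq_of_step hstep ⟨a0, Relation.ReflTransGen.refl, h0⟩
  exact ⟨f, hf0, hQ⟩

theorem mem_zip_map_self {α β : Type u} (g : α → β) :
    ∀ {l : List α} {p : α × β}, p ∈ l.zip (l.map g) → p.1 ∈ l ∧ p.2 = g p.1 := by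
  intro l
  induction l with
  | nil => intro p hp; simp at hp
  | cons a t ih =>
    intro p hp
    simp only [List.map_cons, List.zip_cons_cons, List.mem_cons] at hp
    rcases hp with rfl | hp
    · simp
    · obtain ⟨h1, h2⟩ := ih hp
      exact ⟨List.mem_cons_of_mem _ h1, h2⟩

/-! ### Concatenation of a sequence of lists into a stream -/

def catStream (hs : ℕ → List C) (d : C) : ℕ → ℕ → C
  | k, n =>
    if h : n < (hs k).length then (hs k).get ⟨n, h⟩
    else if hz : (hs k).length = 0 then d
    else catStream hs d (k + 1) (n - (hs k).length)
  termination_by k n => n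
  decreasing_by omega

theorem catStream_eq (hs : ℕ → List C) (d : C) (k : ℕ) (hne : hs k ≠ []) :
    (fun n => catStream hs d k n) = appendInf (hs k) (catStream hs d (k + 1)) := by
  funext n
  rw [catStream, appendInf]
  split
  · rfl
  · rw [dif_neg]
    simpa using hne

/-! ### Finite trace derivations from derivations -/

theorem trace_last (c₀ : C) (pl : List (Judg C)) (ts : List (List C)) (hne : pl ≠ [])
    (hlen : ts.length = pl.length) :
    ∃ l₀ : List C,
      c₀ :: ((pl.zip ts).map finPart).flatten = l₀ ++ [(pl.getLast hne).res] := by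
  have hts : ts ≠ [] := by
    intro h; apply hne; rw [h] at hlen; exact List.length_eq_zero_iff.1 hlen.symm
  have hpl : pl.dropLast ++ [pl.getLast hne] = pl := List.dropLast_append_getLast hne
  have hts' : ts.dropLast ++ [ts.getLast hts] = ts := List.dropLast_append_getLast hts
  have hlen' : pl.dropLast.length = ts.dropLast.length := by
    rw [List.length_dropLast, List.length_dropLast, hlen]
  have hz : pl.zip ts = pl.dropLast.zip ts.dropLast ++ [(pl.getLast hne, ts.getLast hts)] := by
    conv_lhs => rw [← hpl, ← hts']
    rw [List.zip_append hlen']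
    rfl
  refine ⟨c₀ :: ((pl.dropLast.zip ts.dropLast).map finPart).flatten ++ ts.getLast hts, ?_⟩
  rw [hz]
  simp [finPart]

theorem der_to_trfin {S : BigStep C} {a r : C} (h : Derives S a r) :
    ∃ l : List C, TrDerivesFin S a (.fin (l ++ [r])) := by
  classical
  induction h with
  | ax hr =>
    exact ⟨[], TrDerivesFin.step (TrRule.ax hr) (by simp)⟩
  | @rule ρ hρ hall ih =>
    set g : Judg C → List C := fun j =>
      if h : ∃ l, TrDerivesFin S j.conf (.fin (l ++ [j.res])) then h.choose else [] with hg
    have hgood : ∀ j ∈ ρ.premises, TrDerivesFin S j.conf (.fin (g j ++ [j.res])) := by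
      intro j hj
      have hex := ih j hj
      simp only [hg, dif_pos hex]
      exact hex.choose_spec
    have hlen : (ρ.premises.map g).length = ρ.premises.length := by simp
    have hstep := TrDerivesFin.step (TrRule.intro (ts := ρ.premises.map g) hρ hlen) ?_
    · obtain ⟨l₀, hl₀⟩ := trace_last ρ.concl ρ.premises (ρ.premises.map g) ρ.ne hlen
      rw [hl₀] at hstep
      exact ⟨l₀, hstep⟩
    · intro p hp
      obtain ⟨q, hq, rfl⟩ := List.mem_map.1 hp
      obtain ⟨h1, h2⟩ := mem_zip_map_self g hq
      simp only [finPart, h2]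
      exact hgood q.1 h1

/-! ### Divergence chains -/

/-- One divergence step: a rule applicable at `a` whose earlier premises are derivable and
whose next premise has configuration `b`. -/
def Step (S : BigStep C) (a b : C) : Prop :=
  ∃ ρ ∈ S.Rules, ∃ pre : List (Judg C), ∃ j : Judg C, ∃ rest : List (Judg C),
    ρ.premises = pre ++ j :: rest ∧ ρ.concl = a ∧ j.conf = b ∧
    ∀ j' ∈ pre, Derives S j'.conf j'.res

/-- Divergence: an infinite chain of divergence steps. -/
def Div (S : BigStep C) (c : C) : Prop :=
  ∃ cs : ℕ → C, cs 0 = c ∧ ∀ n, Step S (cs n) (cs (n + 1))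

theorem div_to_trace {S : BigStep C} {c : C} (h : Div S c) :
    ∃ f : ℕ → C, TrDerives S c (Trace.inf f) := by
  classical
  obtain ⟨cs, h0, hstep⟩ := h
  -- choose the data of each step
  choose ρ hρ pre j rest hprem hconcl hconf hder using hstep
  -- choose finite traces for derivable judgments
  set g : Judg C → List C := fun j' =>
    if h : ∃ l, TrDerivesFin S j'.conf (.fin (l ++ [j'.res])) then h.choose else [] with hg
  have hgood : ∀ (j' : Judg C), Derives S j'.conf j'.res →
      TrDerivesFin S j'.conf (.fin (g j' ++ [j'.res])) := by
    intro j' hd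
    have hex := der_to_trfin hd
    simp only [hg, dif_pos hex]
    exact hex.choose_spec
  set header : ℕ → List C := fun n =>
    cs n :: (((pre n).zip ((pre n).map g)).map finPart).flatten with hheader
  refine ⟨catStream header c 0, ?_⟩
  refine ⟨fun c' t' => TrDerivesFin S c' t' ∨
    ∃ k, c' = cs k ∧ t' = .inf (catStream header c k), ?_, Or.inr ⟨0, h0.symm, rfl⟩⟩
  rintro c' t' (hfin | ⟨k, rfl, rfl⟩)
  · obtain ⟨hrule, hsub⟩ := hfin
    exact ⟨_, hrule, fun p hp => Or.inl (hsub p hp)⟩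
  · have hlen : ((pre k).map g).length = (pre k).length := by simp
    have hrule := TrRule.div (ρ := ρ k) (pre := pre k) (rest := rest k) (j := j k)
      (ts := (pre k).map g) (f := catStream header c (k + 1)) (hρ k) (hprem k) hlen
    rw [hconcl k] at hrule
    have heq : appendInf (cs k :: (((pre k).zip ((pre k).map g)).map finPart).flatten)
        (catStream header c (k + 1)) = catStream header c k := by
      have := catStream_eq header c k (by simp [hheader])
      rw [← this]
    rw [heq] at hrule
    refine ⟨_, hrule, ?_⟩
    intro p hp
    rcases List.mem_append.1 hp with hp | hp
    · obtain ⟨q, hq, rfl⟩ := List.mem_map.1 hp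
      obtain ⟨h1, h2⟩ := mem_zip_map_self g hq
      refine Or.inl ?_
      simp only [finPart, h2]
      exact hgood q.1 (hder k q.1 h1)
    · rw [List.mem_singleton] at hp
      subst hp
      exact Or.inr ⟨k + 1, hconf k, rfl⟩

/-- Soundness of finite traces in a consistent relation. -/
theorem fin_sound {S : BigStep C} {X : C → Trace C → Prop}
    (hX : ∀ c' t', X c' t' → ∃ prems, TrRule S c' t' prems ∧ ∀ p ∈ prems, X p.1 p.2) :
    ∀ (n : ℕ) (l : List C) (c' : C), l.length ≤ n → X c' (.fin l) →
      ∃ (l₀ : List C) (r : C), l = l₀ ++ [r] ∧ Derives S c' r := by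
  intro n
  induction n with
  | zero =>
    intro l c' hle hx
    obtain ⟨prems, hrule, _⟩ := hX _ _ hx
    cases hrule with
    | ax hr => simp at hle
    | intro hρ hlen => simp at hle
  | succ m ih =>
    intro l c' hle hx
    obtain ⟨prems, hrule, hsub⟩ := hX _ _ hx
    cases hrule with
    | ax hr => exact ⟨[], _, rfl, Derives.ax hr⟩
    | @intro ρ ts hρ hlen =>
      -- each premise trace is shorter
      have hderp : ∀ p ∈ ρ.premises.zip ts, Derives S p.1.conf p.1.res := by
        intro p hp
        have hxp : X p.1.conf (.fin (finPart p)) :=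
          hsub _ (List.mem_map_of_mem hp)
        have hlenp : (finPart p).length ≤ m := by
          have hmem : (finPart p).length ∈ ((ρ.premises.zip ts).map finPart).map List.length :=
            List.mem_map_of_mem (List.mem_map_of_mem hp)
          have hle2 : (finPart p).length ≤ ((ρ.premises.zip ts).map finPart).flatten.length := by
            rw [List.length_flatten]
            exact List.single_le_sum (fun x _ => Nat.zero_le x) _ hmem
          have : (ρ.concl :: ((ρ.premises.zip ts).map finPart).flatten).length ≤ m + 1 := hle
          simp only [List.length_cons] at this
          omega
        obtain ⟨l₀, r, hshape, hd⟩ := ih _ _ hlenp hxp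
        have hr : r = p.1.res := by
          have := congrArg (fun l => l.getLast?) hshape
          simp [finPart] at this
          exact this.symm
        rw [← hr]; exact hd
      have hall : ∀ j ∈ ρ.premises, Derives S j.conf j.res := by
        intro jj hj
        have : jj ∈ (ρ.premises.zip ts).map Prod.fst := by
          rw [List.map_fst_zip (le_of_eq hlen.symm)]
          exact hj
        obtain ⟨p, hp, rfl⟩ := List.mem_map.1 this
        exact hderp p hp
      obtain ⟨l₀, hl₀⟩ := trace_last ρ.concl ρ.premises ts ρ.ne hlen
      exact ⟨l₀, _, hl₀, Derives.rule hρ hall⟩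

theorem trace_to_div {S : BigStep C} {c : C} {f : ℕ → C}
    (h : TrDerives S c (Trace.inf f)) : Div S c := by
  obtain ⟨X, hX, hc⟩ := h
  have hstep : ∀ p : C × (ℕ → C), X p.1 (.inf p.2) →
      ∃ q : C × (ℕ → C), X q.1 (.inf q.2) ∧ Step S p.1 q.1 := by
    rintro ⟨a, fa⟩ hx
    obtain ⟨prems, hrule, hsub⟩ := hX _ _ hx
    cases hrule with
    | @div ρ pre rest j ts f' hρ hprem hlen =>
      refine ⟨(j.conf, f'), ?_, ?_⟩
      · exact hsub (j.conf, Trace.inf f') (by simp)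
      · refine ⟨ρ, hρ, pre, j, rest, hprem, rfl, rfl, ?_⟩
        intro j' hj'
        have : j' ∈ (pre.zip ts).map Prod.fst := by
          rw [List.map_fst_zip (le_of_eq hlen.symm)]
          exact hj'
        obtain ⟨p, hp, rfl⟩ := List.mem_map.1 this
        have hxp : X p.1.conf (.fin (finPart p)) :=
          hsub _ (List.mem_append_left _ (List.mem_map_of_mem hp))
        obtain ⟨l₀, r, hshape, hd⟩ := fin_sound hX (finPart p).length _ _ le_rfl hxp
        have hr : r = p.1.res := by
          have := congrArg (fun l => l.getLast?) hshape
          simp [finPart] at this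
          exact this.symm
        rw [← hr]; exact hd
  obtain ⟨g, hg0, _, hQ⟩ := seq_of_step hstep (a0 := (c, f)) hc
  exact ⟨fun n => (g n).1, by show (g 0).1 = c; rw [hg0], hQ⟩

/-! ### From divergence to infinite reduction sequences -/

theorem lift_rtg {S : BigStep C} {τ τ' : FTree C} (h : Relation.ReflTransGen (Red S) τ τ')
    (a : C) (l : List (FTree C)) :
    Relation.ReflTransGen (Red S) (.node a none (l ++ [τ])) (.node a none (l ++ [τ'])) := by
  induction h with
  | refl => exact Relation.ReflTransGen.refl
  | tail _ hstep ih => exact ih.tail (Red.inner hstep)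

theorem lift_tg {S : BigStep C} {τ τ' : FTree C} (h : Relation.TransGen (Red S) τ τ')
    (a : C) (l : List (FTree C)) :
    Relation.TransGen (Red S) (.node a none (l ++ [τ])) (.node a none (l ++ [τ'])) := by
  induction h with
  | single hstep => exact Relation.TransGen.single (Red.inner hstep)
  | tail _ hstep ih => exact ih.tail (Red.inner hstep)

/-- Expansion: reduce the fresh leaf at a rule's conclusion to the tree whose children are
completed trees for the first premises plus a fresh leaf for the next premise. -/
theorem expand {S : BigStep C} {ρ : Rule C} (hρ : ρ ∈ S.Rules) :
    ∀ (pre : List (Judg C)) (j : Judg C) (rest : List (Judg C)),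
      ρ.premises = pre ++ j :: rest →
      (∀ j' ∈ pre, ∃ τ : FTree C, τ.judg = (j'.conf, some j'.res) ∧
        Relation.ReflTransGen (Red S) (.node j'.conf none []) τ) →
      ∃ l : List (FTree C),
        l.map FTree.judg = pre.map (fun j' => (j'.conf, some j'.res)) ∧
        Relation.TransGen (Red S) (.node ρ.concl none [])
          (.node ρ.concl none (l ++ [.node j.conf none []])) := by
  intro pre
  induction pre using List.reverseRecOn with
  | nil =>
    intro j rest hprem _
    exact ⟨[], rfl, Relation.TransGen.single (Red.start hρ (by simpa using hprem))⟩
  | append_singleton ds d ihp =>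
    intro j rest hprem hcomp
    obtain ⟨l', hmap', hpath'⟩ := ihp d (j :: rest) (by simpa using hprem)
      (fun j' hj' => hcomp j' (List.mem_append_left _ hj'))
    obtain ⟨τd, hτd, hpathd⟩ := hcomp d (List.mem_append_right _ (List.mem_singleton_self d))
    have h1 : Relation.ReflTransGen (Red S) (.node ρ.concl none (l' ++ [.node d.conf none []]))
        (.node ρ.concl none (l' ++ [τd])) := lift_rtg hpathd ρ.concl l'
    have h2 : Red S (.node ρ.concl none (l' ++ [τd]))
        (.node ρ.concl none ((l' ++ [τd]) ++ [.node j.conf none []])) := by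
      apply Red.next hρ (by simpa using hprem)
      rw [List.map_append, hmap']
      simp [hτd]
    refine ⟨l' ++ [τd], ?_, ((hpath'.trans_left h1).tail h2)⟩
    rw [List.map_append, hmap']
    simp [hτd]

/-- Completion: a derivable judgment gives a reduction path from the fresh leaf to a
completed tree. -/
theorem completion {S : BigStep C} {a r : C} (h : Derives S a r) :
    ∃ τ : FTree C, τ.judg = (a, some r) ∧
      Relation.ReflTransGen (Red S) (.node a none []) τ := by
  induction h with
  | @ax r hr => exact ⟨.node r (some r) [], rfl, Relation.ReflTransGen.single (Red.res hr)⟩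
  | @rule ρ hρ hall ih =>
    have hprem : ρ.premises = ρ.premises.dropLast ++ ρ.lastJ :: [] := by
      simpa [Rule.lastJ] using (List.dropLast_append_getLast ρ.ne).symm
    obtain ⟨l, hmap, hpath⟩ := expand hρ ρ.premises.dropLast ρ.lastJ [] hprem
      (fun j' hj' => ih j' (List.dropLast_subset _ hj'))
    obtain ⟨τl, hτl, hpathl⟩ := ih ρ.lastJ (List.getLast_mem ρ.ne)
    have h1 := lift_rtg hpathl ρ.concl l
    have h2 : Red S (.node ρ.concl none (l ++ [τl]))
        (.node ρ.concl (some ρ.lastJ.res) (l ++ [τl])) := by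
      apply Red.complete hρ (by simpa using hprem)
      rw [List.map_append, hmap]
      simp [hτl]
    exact ⟨.node ρ.concl (some ρ.lastJ.res) (l ++ [τl]), rfl,
      ((hpath.trans_left h1).tail h2).to_reflTransGen⟩

/-- Trees that diverge along the rightmost spine. -/
inductive Dv (S : BigStep C) : FTree C → Prop
  | leaf {c : C} : Div S c → Dv S (.node c none [])
  | inner {c : C} {l : List (FTree C)} {τ : FTree C} :
      Dv S τ → Dv S (.node c none (l ++ [τ]))

theorem dv_progress {S : BigStep C} {τ : FTree C} (h : Dv S τ) :
    ∃ τ', Relation.TransGen (Red S) τ τ' ∧ Dv S τ' := by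
  induction h with
  | @leaf c hdiv =>
    obtain ⟨cs, h0, hstep⟩ := hdiv
    obtain ⟨ρ, hρ, pre, j, rest, hprem, hconcl, hconf, hder⟩ := hstep 0
    have hdiv' : Div S (cs 1) := ⟨fun n => cs (n + 1), rfl, fun n => hstep (n + 1)⟩
    obtain ⟨l, _, hpath⟩ := expand hρ pre j rest hprem (fun j' hj' => completion (hder j' hj'))
    rw [hconcl, h0] at hpath
    rw [hconf] at hpath
    exact ⟨_, hpath, Dv.inner (Dv.leaf (hconf ▸ hdiv'))⟩
  | @inner c l τ _ ih =>
    obtain ⟨τ', hpath, hdv⟩ := ih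
    exact ⟨_, lift_tg hpath c l, Dv.inner hdv⟩

theorem div_to_red {S : BigStep C} {c : C} (h : Div S c) :
    ∃ τs : ℕ → FTree C, τs 0 = FTree.node c none [] ∧ ∀ n, Red S (τs n) (τs (n + 1)) :=
  inf_of_plus (fun _ hd => dv_progress hd) (Dv.leaf h)

/-! ### From infinite reduction sequences to divergence -/

/-- The children of a finite tree. -/
def FTree.children : FTree C → List (FTree C)
  | .node _ _ l => l

@[simp] theorem FTree.children_node (a : C) (u : Option C) (l : List (FTree C)) :
    (FTree.node a u l).children = l := rfl

@[simp] theorem FTree.judg_node (a : C) (u : Option C) (l : List (FTree C)) :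
    (FTree.node a u l).judg = (a, u) := rfl

theorem red_src {S : BigStep C} {τ τ' : FTree C} (h : Red S τ τ') :
    ∃ (a : C) (l : List (FTree C)), τ = .node a none l := by
  cases h <;> exact ⟨_, _, rfl⟩

theorem red_conf {S : BigStep C} {τ τ' : FTree C} (h : Red S τ τ') :
    τ'.judg.1 = τ.judg.1 := by
  cases h <;> rfl

theorem concat_inj {α : Type u} {a b : List α} {x y : α} (h : a ++ [x] = b ++ [y]) :
    a = b ∧ x = y := by
  obtain ⟨h1, h2⟩ := List.append_inj' h (by simp)
  exact ⟨h1, by simpa using h2⟩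

theorem der_transfer {S : BigStep C} {l₁ l₂ : List (Judg C)}
    (h : l₁.map (fun j' => (j'.conf, some j'.res)) = l₂.map (fun j' => (j'.conf, some j'.res)))
    (hd : ∀ j ∈ l₂, Derives S j.conf j.res) :
    ∀ j ∈ l₁, Derives S j.conf j.res := by
  intro j hj
  have hmem : (j.conf, some j.res) ∈ l₂.map (fun j' => (j'.conf, some j'.res)) := by
    rw [← h]
    exact List.mem_map_of_mem hj
  obtain ⟨j', hj', he⟩ := List.mem_map.1 hmem
  have h1 : j'.conf = j.conf := congrArg Prod.fst he
  have h2 : j'.res = j.res := Option.some_inj.1 (congrArg Prod.snd he)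
  rw [← h1, ← h2]
  exact hd j' hj'

/-- The invariant maintained by reduction, starting from a fresh leaf. -/
inductive Inv (S : BigStep C) : FTree C → Prop
  | leaf (c : C) : Inv S (.node c none [])
  | ax {r : C} (h : r ∈ S.R) : Inv S (.node r (some r) [])
  | mid {ρ : Rule C} {pre rest : List (Judg C)} {j : Judg C} {l : List (FTree C)} {τ : FTree C} :
      ρ ∈ S.Rules → ρ.premises = pre ++ j :: rest →
      l.map FTree.judg = pre.map (fun j' => (j'.conf, some j'.res)) →
      (∀ j' ∈ pre, Derives S j'.conf j'.res) →
      Inv S τ → τ.judg.1 = j.conf →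
      Inv S (.node ρ.concl none (l ++ [τ]))
  | done {ρ : Rule C} {pre : List (Judg C)} {j : Judg C} {l : List (FTree C)} :
      ρ ∈ S.Rules → ρ.premises = pre ++ [j] →
      l.map FTree.judg = pre.map (fun j' => (j'.conf, some j'.res)) ++ [(j.conf, some j.res)] →
      (∀ j' ∈ ρ.premises, Derives S j'.conf j'.res) →
      Inv S (.node ρ.concl (some j.res) l)

/-- Completed trees satisfying the invariant encode derivations. -/
theorem inv_sound {S : BigStep C} {τ : FTree C} (h : Inv S τ) :
    ∀ a r, τ.judg = (a, some r) → Derives S a r := by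
  cases h with
  | leaf c => intro a r he; simp at he
  | ax hr =>
    intro a r he
    simp only [FTree.judg_node, Prod.mk.injEq, Option.some.injEq] at he
    rw [← he.1, ← he.2]
    exact Derives.ax hr
  | @done ρ pre j l hρ hprem hmap hders =>
    intro a r he
    simp only [FTree.judg_node, Prod.mk.injEq, Option.some.injEq] at he
    have hlast : ρ.lastJ = j := by
      rw [Rule.lastJ]
      have : (pre ++ [j]).getLast (by simp) = j := List.getLast_concat
      simp_rw [hprem]
      exact this
    rw [← he.1, ← he.2, ← hlast]
    exact Derives.rule hρ hders
  | mid _ _ _ _ _ _ => intro a r he; simp at he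

/-- Inversion for the invariant at an unfinished node with children. -/
theorem inv_inversion {S : BigStep C} {a : C} {ls : List (FTree C)}
    (h : Inv S (.node a none ls)) (hne : ls ≠ []) :
    ∃ (ρ : Rule C) (pre rest : List (Judg C)) (j : Judg C) (l : List (FTree C)) (τ : FTree C),
      ls = l ++ [τ] ∧ ρ ∈ S.Rules ∧ ρ.premises = pre ++ j :: rest ∧ ρ.concl = a ∧
      l.map FTree.judg = pre.map (fun j' => (j'.conf, some j'.res)) ∧
      (∀ j' ∈ pre, Derives S j'.conf j'.res) ∧ Inv S τ ∧ τ.judg.1 = j.conf := by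
  cases h with
  | leaf c => exact absurd rfl hne
  | @mid ρ pre rest j l τ hρ hprem hmap hders hinv hconf =>
    exact ⟨ρ, pre, rest, j, l, τ, rfl, hρ, hprem, rfl, hmap, hders, hinv, hconf⟩

theorem inv_red {S : BigStep C} {τ τ' : FTree C} (hred : Red S τ τ') (hinv : Inv S τ) :
    Inv S τ' := by
  induction hred with
  | res hr => exact Inv.ax hr
  | @start ρ j rest hρ hprem =>
    exact Inv.mid (pre := []) (l := []) (τ := .node j.conf none []) hρ (by simpa using hprem) (by simp) (by simp) (Inv.leaf j.conf) rfl
  | @complete ρ' pre j' l hρ' hprem hmap =>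
    have hne : l ≠ [] := by
      intro h; rw [h] at hmap; exact absurd hmap.symm (by simp)
    obtain ⟨ρ, pre₀, rest₀, j₀, l₀, τ₀, hls, hρ₀, hprem₀, hconcl₀, hmap₀, hders₀, hinv₀, hconf₀⟩ :=
      inv_inversion hinv hne
    rw [hls, List.map_append, hmap₀] at hmap
    simp only [List.map_cons, List.map_nil] at hmap
    obtain ⟨hm1, hm2⟩ := concat_inj hmap
    have hderj' : Derives S j'.conf j'.res := inv_sound hinv₀ _ _ hm2
    have hders : ∀ j'' ∈ pre, Derives S j''.conf j''.res := der_transfer hm1.symm hders₀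
    refine Inv.done hρ' hprem ?_ ?_
    · rw [hls, List.map_append, hmap₀, hm1]; simp [hm2]
    · rw [hprem]
      intro j'' hj''
      rcases List.mem_append.1 hj'' with h | h
      · exact hders j'' h
      · rw [List.mem_singleton] at h; subst h; exact hderj'
  | @next ρ' pre rest j' j'' l hρ' hprem hmap =>
    have hne : l ≠ [] := by
      intro h; rw [h] at hmap; exact absurd hmap.symm (by simp)
    obtain ⟨ρ, pre₀, rest₀, j₀, l₀, τ₀, hls, hρ₀, hprem₀, hconcl₀, hmap₀, hders₀, hinv₀, hconf₀⟩ :=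
      inv_inversion hinv hne
    rw [hls, List.map_append, hmap₀] at hmap
    simp only [List.map_cons, List.map_nil] at hmap
    obtain ⟨hm1, hm2⟩ := concat_inj hmap
    have hderj' : Derives S j'.conf j'.res := inv_sound hinv₀ _ _ hm2
    have hders : ∀ jx ∈ pre, Derives S jx.conf jx.res := der_transfer hm1.symm hders₀
    have hprem' : ρ'.premises = (pre ++ [j']) ++ j'' :: rest := by rw [hprem]; simp
    refine Inv.mid hρ' hprem' ?_ ?_ (Inv.leaf j''.conf) rfl
    · rw [hls, List.map_append, hmap₀, hm1]; simp [hm2]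
    · intro jx hjx
      rcases List.mem_append.1 hjx with h | h
      · exact hders jx h
      · rw [List.mem_singleton] at h; subst h; exact hderj'
  | @inner c l τ₁ τ₁' hred₁ ih =>
    obtain ⟨ρ, pre, rest, j, l₂, τ₂, hls, hρ, hprem, hconcl, hmap, hders, hinv₂, hconf⟩ :=
      inv_inversion hinv (by simp)
    obtain ⟨hl2, hτ2⟩ := concat_inj hls.symm
    subst hl2
    subst hτ2
    have := Inv.mid hρ hprem hmap hders (ih hinv₂) (by rw [red_conf hred₁]; exact hconf)
    rwa [hconcl] at this

/-- Classification of reduction steps whose target is still unfinished. -/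
theorem red_classify {S : BigStep C} {τ τ' : FTree C} (h : Red S τ τ')
    (h' : τ'.judg.2 = none) :
    (∃ (l₀ : List (FTree C)) (σ σ' : FTree C),
        τ.children = l₀ ++ [σ] ∧ τ'.children = l₀ ++ [σ'] ∧ Red S σ σ') ∨
      τ'.children.length = τ.children.length + 1 := by
  cases h with
  | res hr => simp at h'
  | start hρ hprem => right; simp
  | complete hρ' hprem hmap => simp at h'
  | next hρ' hprem hmap => right; simp
  | @inner c l τ₁ τ₁' hred => exact Or.inl ⟨l, τ₁, τ₁', rfl, rfl, hred⟩

/-- The number of children of a tree satisfying the invariant is bounded. -/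
theorem inv_bound {S : BigStep C} {b : ℕ} (hb : ∀ ρ ∈ S.Rules, ρ.premises.length ≤ b)
    {τ : FTree C} (h : Inv S τ) : τ.children.length ≤ b := by
  cases h with
  | leaf c => simpa using Nat.zero_le b
  | ax hr => simpa using Nat.zero_le b
  | @mid ρ pre rest j l τ₁ hρ hprem hmap _ _ _ =>
    have h1 : l.length = pre.length := by
      have := congrArg List.length hmap; simpa using this
    have h2 : ρ.premises.length = pre.length + 1 + rest.length := by
      rw [hprem]; simp; omega
    have := hb ρ hρ
    simp only [FTree.children_node, List.length_append, List.length_cons, List.length_nil]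
    omega
  | @done ρ pre j l hρ hprem hmap _ =>
    have h1 : l.length = pre.length + 1 := by
      have := congrArg List.length hmap; simpa using this
    have h2 : ρ.premises.length = pre.length + 1 := by rw [hprem]; simp
    have := hb ρ hρ
    simp only [FTree.children_node]
    omega

/-- A monotone bounded sequence of naturals stabilizes. -/
theorem stabilize {k : ℕ → ℕ} {b : ℕ} (hmono : ∀ n, k n ≤ k (n + 1))
    (hbd : ∀ n, k n ≤ b) : ∃ N, ∀ n, N ≤ n → k n = k N := by
  by_contra hcon
  push_neg at hcon
  have hm : Monotone k := monotone_nat_of_le_succ hmono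
  have hstep : ∀ N : ℕ, True → ∃ M : ℕ, True ∧ (N < M ∧ k N < k M) := by
    intro N _
    obtain ⟨n, hn, hne⟩ := hcon N
    refine ⟨n, trivial, ?_, lt_of_le_of_ne (hm hn) (Ne.symm hne)⟩
    rcases Nat.lt_or_ge N n with h | h
    · exact h
    · exact absurd (le_antisymm hn h ▸ rfl) hne
  obtain ⟨f, hf0, _, hQ⟩ := seq_of_step hstep (a0 := 0) trivial
  have hgrow : ∀ i, i ≤ k (f i) := by
    intro i
    induction i with
    | zero => exact Nat.zero_le _
    | succ m ihm => have := (hQ m).2; omega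
  have := hgrow (b + 1)
  have := hbd (f (b + 1))
  omega

/-- Key extraction: from an infinite reduction sequence out of an invariant tree, extract
a divergence step and an infinite reduction sequence out of the next tree. -/
theorem red_key {S : BigStep C} (hBP : S.BP) {τ0 : FTree C} (hinv : Inv S τ0)
    (hinf : ∃ τs : ℕ → FTree C, τs 0 = τ0 ∧ ∀ n, Red S (τs n) (τs (n + 1))) :
    ∃ τ1 : FTree C, Inv S τ1 ∧
      (∃ τs : ℕ → FTree C, τs 0 = τ1 ∧ ∀ n, Red S (τs n) (τs (n + 1))) ∧
      Step S τ0.judg.1 τ1.judg.1 := by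
  obtain ⟨b, hb⟩ := hBP
  obtain ⟨τs, h0, hred⟩ := hinf
  have hinvs : ∀ n, Inv S (τs n) := by
    intro n
    induction n with
    | zero => rw [h0]; exact hinv
    | succ m ihm => exact inv_red (hred m) ihm
  have hnone : ∀ n, (τs n).judg.2 = none := by
    intro n
    obtain ⟨a, l, he⟩ := red_src (hred n)
    rw [he]; rfl
  have hconfs : ∀ n, (τs n).judg.1 = τ0.judg.1 := by
    intro n
    induction n with
    | zero => rw [h0]
    | succ m ihm => rw [red_conf (hred m)]; exact ihm
  set k : ℕ → ℕ := fun n => (τs n).children.length with hk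
  have hmono : ∀ n, k n ≤ k (n + 1) := by
    intro n
    rcases red_classify (hred n) (hnone (n + 1)) with ⟨l₀, σ, σ', he1, he2, _⟩ | hlen
    · simp [hk, he1, he2]
    · simp [hk, hlen]
  have hbd : ∀ n, k n ≤ b := fun n => inv_bound hb (hinvs n)
  obtain ⟨N, hN⟩ := stabilize hmono hbd
  have hinner : ∀ n, N ≤ n → ∃ (l₀ : List (FTree C)) (σ σ' : FTree C),
      (τs n).children = l₀ ++ [σ] ∧ (τs (n + 1)).children = l₀ ++ [σ'] ∧ Red S σ σ' := by
    intro n hn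
    rcases red_classify (hred n) (hnone (n + 1)) with h | hlen
    · exact h
    · exfalso
      have e1 : k n = k N := hN n hn
      have e2 : k (n + 1) = k N := hN (n + 1) (hn.trans (Nat.le_succ n))
      have : k (n + 1) = k n + 1 := hlen
      omega
  set σs : ℕ → FTree C := fun m => (τs (N + m)).children.getLastD τ0 with hσs
  have hσred : ∀ m, Red S (σs m) (σs (m + 1)) := by
    intro m
    obtain ⟨l₀, σ, σ', he1, he2, hr⟩ := hinner (N + m) (Nat.le_add_right N m)
    have e1 : σs m = σ := by rw [hσs]; simp only [he1]; exact List.getLastD_concat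
    have e2 : σs (m + 1) = σ' := by
      rw [hσs]
      have : N + (m + 1) = (N + m) + 1 := by omega
      simp only [this, he2]
      exact List.getLastD_concat
    rw [e1, e2]; exact hr
  -- analyze the tree at time N
  obtain ⟨a, ls, hshape⟩ := red_src (hred N)
  obtain ⟨l₀, σ, σ', he1, he2, _⟩ := hinner N le_rfl
  have hlsne : ls ≠ [] := by
    intro h
    rw [hshape, h] at he1
    exact absurd he1.symm (by simp)
  have hIN := hinvs N
  rw [hshape] at hIN he1
  obtain ⟨ρ, pre, rest, j, l₂, τ₂, hls, hρ, hprem, hconcl, hmap, hders, hinv₂, hconf⟩ :=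
    inv_inversion hIN hlsne
  simp only [FTree.children_node] at he1
  have hτ2 : τ₂ = σ := (concat_inj (hls.symm.trans he1)).2
  have hσ0 : σs 0 = σ := by
    show (τs (N + 0)).children.getLastD τ0 = σ
    rw [Nat.add_zero, hshape, FTree.children_node, he1]
    exact List.getLastD_concat
  have hτ1conf : (σs 0).judg.1 = j.conf := by rw [hσ0, ← hτ2]; exact hconf
  have haconf : a = τ0.judg.1 := by
    have := hconfs N
    rw [hshape] at this
    exact this
  refine ⟨σs 0, ?_, ⟨σs, rfl, hσred⟩, ?_⟩
  · rw [hσ0, ← hτ2]; exact hinv₂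
  · exact ⟨ρ, hρ, pre, j, rest, hprem, by rw [hconcl, haconf], by rw [hτ1conf], hders⟩

/-- From an infinite reduction sequence out of the fresh leaf, divergence. -/
theorem red_to_div {S : BigStep C} (hBP : S.BP) {c : C}
    (h : ∃ τs : ℕ → FTree C, τs 0 = FTree.node c none [] ∧ ∀ n, Red S (τs n) (τs (n + 1))) :
    Div S c := by
  have hstep : ∀ τ : FTree C,
      (Inv S τ ∧ ∃ τs : ℕ → FTree C, τs 0 = τ ∧ ∀ n, Red S (τs n) (τs (n + 1))) →
      ∃ τ' : FTree C,
        (Inv S τ' ∧ ∃ τs : ℕ → FTree C, τs 0 = τ' ∧ ∀ n, Red S (τs n) (τs (n + 1))) ∧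
        Step S τ.judg.1 τ'.judg.1 := by
    rintro τ ⟨hinv, hinf⟩
    obtain ⟨τ1, h1, h2, h3⟩ := red_key hBP hinv hinf
    exact ⟨τ1, ⟨h1, h2⟩, h3⟩
  obtain ⟨f, hf0, _, hQ⟩ := seq_of_step hstep (a0 := FTree.node c none []) ⟨Inv.leaf c, h⟩
  refine ⟨fun n => (f n).judg.1, ?_, hQ⟩
  show (f 0).judg.1 = c
  rw [hf0]
  rfl

/-- Theorem `eq-trace-unknown`: `⊢_{𝓡^tr} c ⇒ t` for some infinite
trace `t` iff there is an infinite `⇝`-reduction sequence from the single-node tree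
with root `c ⇒ ?`. -/
theorem statement17 {C : Type u} (S : BigStep C) (hBP : S.BP) (c : C) :
    (∃ f : ℕ → C, TrDerives S c (Trace.inf f)) ↔
      ∃ τs : ℕ → FTree C, τs 0 = FTree.node c none [] ∧
        ∀ n : ℕ, Red S (τs n) (τs (n + 1)) := by
  constructor
  · rintro ⟨f, hf⟩
    exact div_to_red (trace_to_div hf)
  · intro h
    exact div_to_trace (red_to_div hBP h)

end BigStepMeta
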